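/- arXiv:1712.08887 — 2 statements merged into one kernel-verified Lean document; each statement's English description precedes it below -/
import Mathlib

section
/- For -1 < φ < 0, every entry of w^opt satisfies 1 - B₂ ≤ w_t^opt ≤ 1 + B₂ - 2B₁, where B₁ = γ/((1-φ)² + γ) and B₂ = γ/(1 - φ² + γ); moreover 0 < B₁ < B₂ < 1 in this range, so w_t^opt can exceed 1. -/
set_option maxHeartbeats 2000000

open Matrix

/-- The AR(1) precision tridiagonal matrix. -/
noncomputable def ar1Lambda (n : ℕ) (φ : ℝ) : Matrix (Fin n) (Fin n) ℝ :=
  Matrix.of fun i j =>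
    if i = j then (if i.val = 0 ∨ i.val = n - 1 then (1 : ℝ) else 1 + φ ^ 2)
    else if i.val + 1 = j.val ∨ j.val + 1 = i.val then -φ else 0

lemma ar1_mulVec {n : ℕ} (hn : 2 ≤ n) (φ : ℝ) (x : Fin n → ℝ) (t : Fin n) :
    (ar1Lambda n φ *ᵥ x) t =
      (if t.val = 0 ∨ t.val = n - 1 then 1 else 1 + φ ^ 2) * x t
      - φ * ((if h : 0 < t.val then x ⟨t.val - 1, Nat.lt_of_le_of_lt (Nat.sub_le _ _) t.isLt⟩ else 0)
           + (if h : t.val + 1 < n then x ⟨t.val + 1, h⟩ else 0)) := by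
  have ht := t.isLt
  rw [mulVec, dotProduct]
  by_cases h0 : t.val = 0
  · have hlt : t.val + 1 < n := by omega
    have key : ∀ j : Fin n, ar1Lambda n φ t j * x j =
        (if j = t then 1 * x j else 0) + (if j = (⟨t.val + 1, hlt⟩ : Fin n) then -φ * x j else 0) := by
      intro j
      have hj := j.isLt
      simp only [ar1Lambda, of_apply, Fin.ext_iff]
      split_ifs <;> first | ring1 | (exfalso; omega)
    rw [Finset.sum_congr rfl (fun j _ => key j), Finset.sum_add_distrib,
      Finset.sum_ite_eq' Finset.univ t, Finset.sum_ite_eq' Finset.univ]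
    simp only [Finset.mem_univ, if_true]
    rw [if_pos (Or.inl h0), dif_neg (by omega), dif_pos hlt]
    ring
  · by_cases h1 : t.val = n - 1
    · have hlt : t.val - 1 < n := by omega
      have key : ∀ j : Fin n, ar1Lambda n φ t j * x j =
          (if j = t then 1 * x j else 0) + (if j = (⟨t.val - 1, hlt⟩ : Fin n) then -φ * x j else 0) := by
        intro j
        have hj := j.isLt
        simp only [ar1Lambda, of_apply, Fin.ext_iff]
        split_ifs <;> first | ring1 | (exfalso; omega)
      rw [Finset.sum_congr rfl (fun j _ => key j), Finset.sum_add_distrib,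
        Finset.sum_ite_eq' Finset.univ t, Finset.sum_ite_eq' Finset.univ]
      simp only [Finset.mem_univ, if_true]
      rw [if_pos (Or.inr h1), dif_pos (by omega), dif_neg (by omega)]
      ring
    · have hlt : t.val + 1 < n := by omega
      have hlt' : t.val - 1 < n := by omega
      have key : ∀ j : Fin n, ar1Lambda n φ t j * x j =
          (if j = t then (1 + φ ^ 2) * x j else 0) +
          ((if j = (⟨t.val - 1, hlt'⟩ : Fin n) then -φ * x j else 0) +
           (if j = (⟨t.val + 1, hlt⟩ : Fin n) then -φ * x j else 0)) := by
        intro j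
        have hj := j.isLt
        simp only [ar1Lambda, of_apply, Fin.ext_iff]
        split_ifs <;> first | ring1 | (exfalso; omega)
      rw [Finset.sum_congr rfl (fun j _ => key j), Finset.sum_add_distrib,
        Finset.sum_add_distrib, Finset.sum_ite_eq' Finset.univ t,
        Finset.sum_ite_eq' Finset.univ, Finset.sum_ite_eq' Finset.univ]
      simp only [Finset.mem_univ, if_true]
      rw [if_neg (by push_neg; exact ⟨h0, h1⟩), dif_pos (by omega), dif_pos hlt]
      ring

private lemma cancel_pos {C X : ℝ} (hC : 0 < C) (h : 0 ≤ C * X) : 0 ≤ X := by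
  nlinarith

lemma key_bounds (γ φ a b : ℝ) (hγ : 0 < γ) (hφ0 : -1 < φ) (hφ1 : φ < 0) (hab : a ≤ b)
    (hmax : (γ+1)*b ≤ (1-φ)+φ*a ∨ (γ+1+φ^2)*b ≤ (1-φ)^2+2*φ*a)
    (hmin : (1-φ)+φ*b ≤ (γ+1)*a ∨ (1-φ)^2+2*φ*b ≤ (γ+1+φ^2)*a) :
    1 - γ/(1-φ^2+γ) ≤ a ∧ b ≤ 1 + γ/(1-φ^2+γ) - 2*(γ/((1-φ)^2+γ)) := by
  have hc : (0:ℝ) < -φ := by linarith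
  have h1c : (0:ℝ) < 1+φ := by linarith
  have h1c2 : (0:ℝ) < 1-φ^2 := by nlinarith
  have h1 : (0:ℝ) < (1-φ^2+γ) := by linarith
  have h2 : (0:ℝ) < ((1-φ)^2+γ) := by positivity
  have hD12 : (0:ℝ) ≤ ((1-φ)^2+γ) - (1-φ^2+γ) := by nlinarith
  have hC1 : (0:ℝ) < ((γ+1)*(γ+1+φ^2) - 2*φ^2) := by nlinarith
  have hA : (1-a) * (1-φ^2+γ) ≤ γ ∧
      (b-1) * ((1-φ^2+γ) * ((1-φ)^2+γ)) ≤ γ*((1-φ)^2+γ) - 2*(γ*(1-φ^2+γ)) := by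
    rcases hmax with h | h <;> rcases hmin with h' | h'
    · -- boundary-boundary : a = b with equality
      have hba : b ≤ a := by nlinarith [h, h', hγ, h1c]
      have hba' : a = b := le_antisymm hab hba
      subst hba'
      have heq : (γ+1)*a = 1-φ+φ*a := le_antisymm h h'
      have he : (1-a)*(γ+1-φ) = γ := by linear_combination -heq
      have h1a : (0:ℝ) ≤ 1-a := by nlinarith [he, hγ, hc]
      have hPBB : (0:ℝ) ≤ (γ+1-φ)*(((1-φ)^2+γ)-2*(1-φ^2+γ)) + (1-φ^2+γ)*((1-φ)^2+γ) := by
        nlinarith [mul_nonneg (sq_nonneg φ) h1c2.le, mul_nonneg hc.le (sq_nonneg φ),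
          mul_nonneg hγ.le hc.le, mul_nonneg hγ.le (sq_nonneg φ)]
      have he2 : (γ - (1-a)*(γ+1-φ)) * (((1-φ)^2+γ) - 2*(1-φ^2+γ)) = 0 := by
        rw [show γ - (1-a)*(γ+1-φ) = 0 by linarith, zero_mul]
      constructor
      · nlinarith [mul_nonneg h1a (mul_nonneg (sq_nonneg φ) h1c.le), he,
          mul_nonneg h1a hc.le, mul_nonneg h1a (sq_nonneg φ)]
      · nlinarith [mul_nonneg h1a hPBB, he2]
    · -- max boundary, min interior
      have hCa : ((γ+1)*(1-φ)^2 + 2*φ*(1-φ)) ≤ ((γ+1)*(γ+1+φ^2) - 2*φ^2) * a := by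
        nlinarith [mul_le_mul_of_nonneg_left h' (by linarith : (0:ℝ) ≤ γ+1),
          mul_le_mul_of_nonneg_left h (by linarith : (0:ℝ) ≤ -2*φ)]
      have hb : (γ+1)*((γ+1)*(γ+1+φ^2) - 2*φ^2)*b ≤ ((γ+1)*(γ+1+φ^2) - 2*φ^2)*(1-φ) + φ*((γ+1)*(1-φ)^2 + 2*φ*(1-φ)) := by
        nlinarith [mul_le_mul_of_nonneg_left h hC1.le,
          mul_le_mul_of_nonneg_left hCa (by linarith : (0:ℝ) ≤ -φ)]
      have hQA : (0:ℝ) ≤ ((γ+1)*(1-φ)^2 + 2*φ*(1-φ))*(1-φ^2+γ) - (1-φ^2)*((γ+1)*(γ+1+φ^2) - 2*φ^2) := by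
        nlinarith [mul_nonneg hγ.le hc.le, mul_nonneg (mul_nonneg hγ.le hc.le) h1c2.le,
          mul_nonneg (mul_nonneg hγ.le hγ.le) hc.le,
          mul_nonneg (mul_nonneg (mul_nonneg hγ.le hγ.le) hc.le) hc.le]
      have hQB : (0:ℝ) ≤ (γ*((1-φ)^2+γ)-2*(γ*(1-φ^2+γ)))*((γ+1)*((γ+1)*(γ+1+φ^2) - 2*φ^2)) - (((γ+1)*(γ+1+φ^2) - 2*φ^2)*(1-φ) + φ*((γ+1)*(1-φ)^2 + 2*φ*(1-φ)) - (γ+1)*((γ+1)*(γ+1+φ^2) - 2*φ^2))*((1-φ^2+γ)*((1-φ)^2+γ)) := by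
        nlinarith [mul_nonneg (mul_nonneg (mul_nonneg hγ.le hc.le) h1c.le)
            (by nlinarith [sq_nonneg φ, sq_nonneg (φ^2)] : (0:ℝ) ≤ 3-2*φ^2-φ^4),
          mul_nonneg (mul_nonneg (mul_nonneg (mul_nonneg hγ.le hγ.le) hc.le) h1c.le)
            (by nlinarith [sq_nonneg (φ^2)] : (0:ℝ) ≤ 9-φ^4),
          mul_nonneg (mul_nonneg (mul_nonneg (mul_nonneg (mul_nonneg hγ.le hγ.le) hγ.le) hc.le) h1c.le)
            (by nlinarith [sq_nonneg φ] : (0:ℝ) ≤ 9+2*φ^2),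
          mul_nonneg (mul_nonneg (mul_nonneg (mul_nonneg (mul_nonneg hγ.le hγ.le) hγ.le) hγ.le) hc.le) h1c.le]
      constructor
      · have hX : 0 ≤ ((γ+1)*(γ+1+φ^2) - 2*φ^2) * (γ - (1-a)*(1-φ^2+γ)) := by
          nlinarith [mul_nonneg (sub_nonneg.2 hCa) h1.le, hQA]
        linarith [cancel_pos hC1 hX]
      · have hX : 0 ≤ ((γ+1)*((γ+1)*(γ+1+φ^2) - 2*φ^2)) * ((γ*((1-φ)^2+γ) - 2*(γ*(1-φ^2+γ))) - (b-1)*((1-φ^2+γ)*((1-φ)^2+γ))) := by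
          nlinarith [mul_nonneg (sub_nonneg.2 hb) (mul_pos h1 h2).le, hQB]
        have := cancel_pos (by positivity) hX
        linarith
    · -- max interior, min boundary
      have hCb : ((γ+1)*(γ+1+φ^2) - 2*φ^2) * b ≤ ((γ+1)*(1-φ)^2 + 2*φ*(1-φ)) := by
        nlinarith [mul_le_mul_of_nonneg_left h (by linarith : (0:ℝ) ≤ γ+1),
          mul_le_mul_of_nonneg_left h' (by linarith : (0:ℝ) ≤ -2*φ)]
      have ha : ((γ+1)*(γ+1+φ^2) - 2*φ^2)*(1-φ) + φ*((γ+1)*(1-φ)^2 + 2*φ*(1-φ)) ≤ (γ+1)*((γ+1)*(γ+1+φ^2) - 2*φ^2)*a := by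
        nlinarith [mul_le_mul_of_nonneg_left h' hC1.le,
          mul_le_mul_of_nonneg_left hCb (by linarith : (0:ℝ) ≤ -φ)]
      have hQC : (0:ℝ) ≤ (((γ+1)*(γ+1+φ^2) - 2*φ^2)*(1-φ) + φ*((γ+1)*(1-φ)^2 + 2*φ*(1-φ)))*(1-φ^2+γ) - (1-φ^2)*(((γ+1)*(γ+1+φ^2) - 2*φ^2)*(γ+1)) := by
        nlinarith [mul_nonneg (mul_nonneg hγ.le hc.le) (mul_nonneg h1c.le h1c2.le),
          mul_nonneg (mul_nonneg hγ.le hγ.le) (mul_nonneg hc.le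
            (by nlinarith [sq_nonneg φ, mul_nonneg (sq_nonneg φ) hc.le] : (0:ℝ) ≤ 2-φ^2+(-φ)*φ^2)),
          mul_nonneg (mul_nonneg (mul_nonneg hγ.le hγ.le) hγ.le) (mul_nonneg hc.le h1c.le)]
      have hQD : (0:ℝ) ≤ (γ*((1-φ)^2+γ)-2*(γ*(1-φ^2+γ)))*((γ+1)*(γ+1+φ^2) - 2*φ^2) - (((γ+1)*(1-φ)^2 + 2*φ*(1-φ)) - ((γ+1)*(γ+1+φ^2) - 2*φ^2))*((1-φ^2+γ)*((1-φ)^2+γ)) := by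
        nlinarith [mul_nonneg (mul_nonneg hγ.le hc.le) (sq_nonneg (1-φ^2)),
          mul_nonneg (mul_nonneg (mul_nonneg hγ.le hγ.le) hc.le)
            (by nlinarith [sq_nonneg φ, mul_nonneg (sq_nonneg φ) (mul_nonneg hc.le hc.le)] :
              (0:ℝ) ≤ 2+(-φ)+φ^2*(-φ)+φ^2*(-φ)*(-φ)),
          mul_nonneg (mul_nonneg (mul_nonneg hγ.le hγ.le) hγ.le) (mul_nonneg hc.le h1c.le)]
      constructor
      · have hX : 0 ≤ ((γ+1)*((γ+1)*(γ+1+φ^2) - 2*φ^2)) * (γ - (1-a)*(1-φ^2+γ)) := by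
          nlinarith [mul_nonneg (sub_nonneg.2 ha) h1.le, hQC]
        have := cancel_pos (by positivity) hX
        linarith
      · have hX : 0 ≤ ((γ+1)*(γ+1+φ^2) - 2*φ^2) * ((γ*((1-φ)^2+γ) - 2*(γ*(1-φ^2+γ))) - (b-1)*((1-φ^2+γ)*((1-φ)^2+γ))) := by
          nlinarith [mul_nonneg (sub_nonneg.2 hCb) (mul_pos h1 h2).le, hQD]
        linarith [cancel_pos hC1 hX]
    · -- interior-interior : a = b with equality
      have hba : b ≤ a := by nlinarith [h, h', hγ, sq_nonneg (1+φ)]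
      have hba' : a = b := le_antisymm hab hba
      subst hba'
      have heq : (γ+1+φ^2)*a = (1-φ)^2+2*φ*a := le_antisymm h h'
      have he : (1-a)*((1-φ)^2+γ) = γ := by linear_combination -heq
      have h1a : (0:ℝ) ≤ 1-a := by nlinarith [he, hγ, h2]
      have he2 : (γ - (1-a)*((1-φ)^2+γ)) * (((1-φ)^2+γ) - 2*(1-φ^2+γ)) = 0 := by
        rw [show γ - (1-a)*((1-φ)^2+γ) = 0 by linarith, zero_mul]
      constructor
      · nlinarith [mul_nonneg h1a hD12, he]
      · nlinarith [mul_nonneg (mul_nonneg h1a h2.le) hD12, he2]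
  obtain ⟨hA1, hB1⟩ := hA
  constructor
  · have hq : 1 - a ≤ γ/(1-φ^2+γ) := (le_div_iff₀ h1).mpr hA1
    linarith
  · have hq : b - 1 ≤ (γ*((1-φ)^2+γ) - 2*(γ*(1-φ^2+γ)))/((1-φ^2+γ)*((1-φ)^2+γ)) :=
      (le_div_iff₀ (mul_pos h1 h2)).mpr hB1
    have he : (γ*((1-φ)^2+γ) - 2*(γ*(1-φ^2+γ)))/((1-φ^2+γ)*((1-φ)^2+γ))
        = γ/(1-φ^2+γ) - 2*(γ/((1-φ)^2+γ)) := by field_simp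
    rw [he] at hq
    linarith

private lemma max_step {A B d k φ m u v : ℝ} (hB : 0 < B) (hφ1 : φ < 0) (hk : 0 ≤ k)
    (hm : 0 ≤ m) (hv : |v| = m) (hu : |u| ≤ k*m)
    (heq : (A + B*d)*v = B*(φ*u)) (hcoef : B*(-φ)*k < A + B*d) : m ≤ 0 := by
  have hpos : 0 < A + B*d :=
    lt_of_le_of_lt (mul_nonneg (mul_nonneg hB.le (by linarith)) hk) hcoef
  have h3 : (A+B*d)*m ≤ B*(-φ)*(k*m) := by
    have e1 : |(A+B*d)*v| = (A+B*d)*m := by rw [abs_mul, hv, abs_of_pos hpos]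
    have e2 : |B*(φ*u)| ≤ B*(-φ)*(k*m) := by
      rw [abs_mul, abs_mul, abs_of_pos hB, abs_of_neg hφ1]
      nlinarith [mul_le_mul_of_nonneg_left hu (by linarith : (0:ℝ) ≤ -φ), hB,
        mul_le_mul_of_nonneg_left (mul_le_mul_of_nonneg_left hu (by linarith : (0:ℝ) ≤ -φ)) hB.le]
    calc (A+B*d)*m = |(A+B*d)*v| := e1.symm
      _ = |B*(φ*u)| := by rw [heq]
      _ ≤ B*(-φ)*(k*m) := e2
  nlinarith [h3, hcoef, hm]

/-- STATEMENT 11: for `-1 < φ < 0`, every entry of `w^opt = 1 - σ_ε⁻² Ω⁻¹ 1`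
satisfies `1 - B₂ ≤ w_t^opt ≤ 1 + B₂ - 2B₁`, with `B₁ = γ/((1-φ)²+γ)`,
`B₂ = γ/(1-φ²+γ)`; moreover `0 < B₁ < B₂ < 1`. -/
theorem stmt_12 (n : ℕ) (hn : 2 ≤ n) (φ γ : ℝ) (hφ0 : -1 < φ) (hφ1 : φ < 0)
    (σε ση : ℝ) (hσε : 0 < σε) (hση : 0 < ση) (hγ : γ = ση ^ 2 / σε ^ 2)
    (Ω : Matrix (Fin n) (Fin n) ℝ)
    (hΩ : Ω = (σε ^ 2)⁻¹ • (1 : Matrix (Fin n) (Fin n) ℝ) + (ση ^ 2)⁻¹ • ar1Lambda n φ)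
    (wopt : Fin n → ℝ)
    (hwopt : wopt = (1 : Fin n → ℝ) - (σε ^ 2)⁻¹ • (Ω⁻¹ *ᵥ (1 : Fin n → ℝ)))
    (B₁ B₂ : ℝ) (hB₁ : B₁ = γ / ((1 - φ) ^ 2 + γ)) (hB₂ : B₂ = γ / (1 - φ ^ 2 + γ)) :
    (∀ t : Fin n, 1 - B₂ ≤ wopt t ∧ wopt t ≤ 1 + B₂ - 2 * B₁) ∧
    (0 < B₁ ∧ B₁ < B₂ ∧ B₂ < 1) := by
  have hγpos : 0 < γ := by rw [hγ]; positivity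
  have hA : (0:ℝ) < (σε^2)⁻¹ := by positivity
  have hB : (0:ℝ) < (ση^2)⁻¹ := by positivity
  have h1p : (0:ℝ) < 1+φ := by linarith
  have h1c2 : (0:ℝ) < 1-φ^2 := by nlinarith
  have hD2 : (0:ℝ) < 1-φ^2+γ := by linarith
  have hD1 : (0:ℝ) < (1-φ)^2+γ := by positivity
  -- invertibility of Ω
  have hunit : IsUnit Ω := by
    rw [← Matrix.mulVec_injective_iff_isUnit]
    have hker : ∀ x : Fin n → ℝ, Ω *ᵥ x = 0 → x = 0 := by
      intro x hx
      rw [hΩ] at hx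
      obtain ⟨t, -, ht⟩ := Finset.exists_max_image Finset.univ (fun i => |x i|)
        ⟨⟨0, by omega⟩, Finset.mem_univ _⟩
      have hmaxi : ∀ i : Fin n, |x i| ≤ |x t| := fun i => ht i (Finset.mem_univ i)
      have hent : (σε^2)⁻¹ * x t + (ση^2)⁻¹ * ((ar1Lambda n φ *ᵥ x) t) = 0 := by
        simpa [add_mulVec, smul_mulVec, one_mulVec] using congrFun hx t
      rw [ar1_mulVec hn] at hent
      have htlt := t.isLt
      have hxt : |x t| ≤ 0 := by
        by_cases h0 : t.val = 0
        · rw [if_pos (Or.inl h0), dif_neg (by omega), dif_pos (by omega)] at hent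
          have heq : ((σε^2)⁻¹ + (ση^2)⁻¹*1)*(x t)
              = (ση^2)⁻¹*(φ*(x ⟨t.val + 1, by omega⟩)) := by linear_combination hent
          have hu : |x ⟨t.val + 1, by omega⟩| ≤ 1*|x t| := by
            rw [one_mul]; exact hmaxi _
          exact max_step hB hφ1 zero_le_one (abs_nonneg _) rfl hu heq
            (by nlinarith [hA, mul_pos hB h1p])
        · by_cases h1 : t.val = n - 1
          · rw [if_pos (Or.inr h1), dif_pos (by omega), dif_neg (by omega)] at hent
            have heq : ((σε^2)⁻¹ + (ση^2)⁻¹*1)*(x t)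
                = (ση^2)⁻¹*(φ*(x ⟨t.val - 1, by omega⟩)) := by linear_combination hent
            have hu : |x ⟨t.val - 1, by omega⟩| ≤ 1*|x t| := by
              rw [one_mul]; exact hmaxi _
            exact max_step hB hφ1 zero_le_one (abs_nonneg _) rfl hu heq
              (by nlinarith [hA, mul_pos hB h1p])
          · rw [if_neg (by push_neg; exact ⟨h0, h1⟩), dif_pos (by omega),
              dif_pos (by omega)] at hent
            have heq : ((σε^2)⁻¹ + (ση^2)⁻¹*(1+φ^2))*(x t)
                = (ση^2)⁻¹*(φ*(x ⟨t.val - 1, by omega⟩ + x ⟨t.val + 1, by omega⟩)) := by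
              linear_combination hent
            have hu : |x ⟨t.val - 1, by omega⟩ + x ⟨t.val + 1, by omega⟩| ≤ 2*|x t| := by
              refine (abs_add_le _ _).trans ?_
              have h5 := hmaxi ⟨t.val - 1, by omega⟩
              have h6 := hmaxi ⟨t.val + 1, by omega⟩
              linarith
            exact max_step hB hφ1 (by norm_num) (abs_nonneg _) rfl hu heq
              (by nlinarith [hA, mul_pos hB (mul_pos h1p h1p)])
      funext i
      have h7 := hmaxi i
      have h8 : |x i| = 0 := le_antisymm (by linarith) (abs_nonneg _)
      simpa using abs_eq_zero.mp h8
    intro x y hxy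
    have h0 : Ω *ᵥ (x - y) = 0 := by rw [mulVec_sub, hxy, sub_self]
    exact sub_eq_zero.mp (hker _ h0)
  have hdet : IsUnit Ω.det := (Matrix.isUnit_iff_isUnit_det Ω).mp hunit
  have hOO : Ω * Ω⁻¹ = 1 := mul_nonsing_inv Ω hdet
  have hueq : Ω *ᵥ ((σε^2)⁻¹ • (Ω⁻¹ *ᵥ (1 : Fin n → ℝ))) = (σε^2)⁻¹ • (1 : Fin n → ℝ) := by
    rw [mulVec_smul, mulVec_mulVec, hOO, one_mulVec]
  -- the componentwise equation
  have hEQ : ∀ t : Fin n,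
      (if t.val = 0 ∨ t.val = n - 1 then 1 else 1+φ^2) * (1 - wopt t)
      - φ * ((if h : 0 < t.val then
                (1 - wopt ⟨t.val - 1, Nat.lt_of_le_of_lt (Nat.sub_le _ _) t.isLt⟩) else 0)
           + (if h : t.val + 1 < n then (1 - wopt ⟨t.val + 1, h⟩) else 0))
      = γ * wopt t := by
    intro t
    have hu1 : (fun i => 1 - wopt i) = (σε^2)⁻¹ • (Ω⁻¹ *ᵥ (1 : Fin n → ℝ)) := by
      funext i; rw [hwopt]; simp
    have h2 : Ω *ᵥ (fun i => 1 - wopt i) = (σε^2)⁻¹ • (1 : Fin n → ℝ) := by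
      rw [hu1]; exact hueq
    rw [hΩ] at h2
    have hent := congrFun h2 t
    simp only [add_mulVec, smul_mulVec, one_mulVec, Pi.add_apply, Pi.smul_apply,
      smul_eq_mul, Pi.one_apply] at hent
    rw [ar1_mulVec hn] at hent
    have hγB : (σε^2)⁻¹ = γ * (ση^2)⁻¹ := by rw [hγ]; field_simp
    have hBne : ((ση:ℝ)^2)⁻¹ ≠ 0 := by positivity
    apply mul_left_cancel₀ hBne
    linear_combination hent + (wopt t) * hγB
  -- extremal indices
  obtain ⟨tb, -, htb⟩ := Finset.exists_max_image Finset.univ wopt ⟨⟨0, by omega⟩, Finset.mem_univ _⟩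
  obtain ⟨ta, -, hta⟩ := Finset.exists_min_image Finset.univ wopt ⟨⟨0, by omega⟩, Finset.mem_univ _⟩
  have hbmax : ∀ i : Fin n, wopt i ≤ wopt tb := fun i => htb i (Finset.mem_univ i)
  have hamin : ∀ i : Fin n, wopt ta ≤ wopt i := fun i => hta i (Finset.mem_univ i)
  have hab : wopt ta ≤ wopt tb := hamin tb
  have hmax : (γ+1)*(wopt tb) ≤ (1-φ)+φ*(wopt ta) ∨
      (γ+1+φ^2)*(wopt tb) ≤ (1-φ)^2+2*φ*(wopt ta) := by
    have he := hEQ tb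
    have htlt := tb.isLt
    by_cases h0 : tb.val = 0
    · left
      rw [if_pos (Or.inl h0), dif_neg (by omega), dif_pos (by omega)] at he
      have h9 := mul_le_mul_of_nonpos_left (hamin ⟨tb.val + 1, by omega⟩) hφ1.le
      linarith
    · by_cases h1 : tb.val = n - 1
      · left
        rw [if_pos (Or.inr h1), dif_pos (by omega), dif_neg (by omega)] at he
        have h9 := mul_le_mul_of_nonpos_left (hamin ⟨tb.val - 1, by omega⟩) hφ1.le
        linarith
      · right
        rw [if_neg (by push_neg; exact ⟨h0, h1⟩), dif_pos (by omega), dif_pos (by omega)] at he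
        have h9 := mul_le_mul_of_nonpos_left (hamin ⟨tb.val - 1, by omega⟩) hφ1.le
        have h10 := mul_le_mul_of_nonpos_left (hamin ⟨tb.val + 1, by omega⟩) hφ1.le
        linarith
  have hmin : (1-φ)+φ*(wopt tb) ≤ (γ+1)*(wopt ta) ∨
      (1-φ)^2+2*φ*(wopt tb) ≤ (γ+1+φ^2)*(wopt ta) := by
    have he := hEQ ta
    have htlt := ta.isLt
    by_cases h0 : ta.val = 0
    · left
      rw [if_pos (Or.inl h0), dif_neg (by omega), dif_pos (by omega)] at he
      have h9 := mul_le_mul_of_nonpos_left (hbmax ⟨ta.val + 1, by omega⟩) hφ1.le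
      linarith
    · by_cases h1 : ta.val = n - 1
      · left
        rw [if_pos (Or.inr h1), dif_pos (by omega), dif_neg (by omega)] at he
        have h9 := mul_le_mul_of_nonpos_left (hbmax ⟨ta.val - 1, by omega⟩) hφ1.le
        linarith
      · right
        rw [if_neg (by push_neg; exact ⟨h0, h1⟩), dif_pos (by omega), dif_pos (by omega)] at he
        have h9 := mul_le_mul_of_nonpos_left (hbmax ⟨ta.val - 1, by omega⟩) hφ1.le
        have h10 := mul_le_mul_of_nonpos_left (hbmax ⟨ta.val + 1, by omega⟩) hφ1.le
        linarith
  obtain ⟨hLa, hUb⟩ := key_bounds γ φ (wopt ta) (wopt tb) hγpos hφ0 hφ1 hab hmax hmin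
  constructor
  · intro t
    constructor
    · rw [hB₂]; linarith [hamin t]
    · rw [hB₁, hB₂]; linarith [hbmax t]
  · refine ⟨by rw [hB₁]; positivity, ?_, ?_⟩
    · rw [hB₁, hB₂, div_lt_div_iff₀ hD1 hD2]
      nlinarith [mul_pos hγpos (mul_pos (neg_pos.mpr hφ1) (by linarith : (0:ℝ) < 1-φ))]
    · rw [hB₂, div_lt_one hD2]
      linarith
end

section
/- Writing w^opt = (γ Λ^{-1} + I)^{-1} 1 as a function of γ > 0 (for fixed 0 < φ < 1), each entry of w^opt is strictly decreasing in γ: ∂w^opt/∂γ = -(γΛ^{-1} + I)^{-1} Λ^{-1} (γΛ^{-1}+I)^{-1} 1 has all entries strictly negative. -/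
open Matrix

lemma sum_ind (n c : ℕ) :
    (∑ j : Fin n, (if (j : ℕ) = c then (1 : ℝ) else 0)) = if c < n then 1 else 0 := by
  by_cases h : c < n
  · rw [if_pos h, Finset.sum_eq_single ⟨c, h⟩]
    · simp
    · intro b _ hb
      rw [if_neg (fun hbc => hb (Fin.ext hbc))]
    · simp
  · rw [if_neg h]
    refine Finset.sum_eq_zero fun j _ => if_neg (fun hj => h ?_)
    omega

lemma ar1_rowsum {n : ℕ} (hn : 2 ≤ n) {φ : ℝ} (hφ0 : 0 < φ) (hφ1 : φ < 1) (m : Fin n) :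
    0 < ∑ j, ar1Lambda n φ m j := by
  have key : ∀ j : Fin n, ar1Lambda n φ m j =
      (if (m : ℕ) = 0 ∨ (m : ℕ) = n - 1 then (1:ℝ) else 1 + φ^2) * (if (j:ℕ) = (m:ℕ) then 1 else 0)
      + (-φ) * (if (j:ℕ) = (m:ℕ)+1 then 1 else 0)
      + (-φ) * (if (m:ℕ) = (j:ℕ)+1 then 1 else 0) := by
    intro j
    show (if m = j then _ else _) = _
    simp only [Fin.ext_iff]
    split_ifs <;> first | ring1 | omega
  rw [Finset.sum_congr rfl (fun j _ => key j)]
  rw [Finset.sum_add_distrib, Finset.sum_add_distrib,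
    ← Finset.mul_sum, ← Finset.mul_sum, ← Finset.mul_sum]
  have hsum3 : (∑ j : Fin n, (if (m:ℕ) = (j:ℕ)+1 then (1:ℝ) else 0))
      = if 1 ≤ (m:ℕ) then 1 else 0 := by
    by_cases hm1 : 1 ≤ (m:ℕ)
    · rw [if_pos hm1, Finset.sum_eq_single ⟨(m:ℕ)-1, by omega⟩]
      · rw [if_pos (by simp; omega)]
      · intro b _ hb
        rw [if_neg (fun hbc => hb (Fin.ext (by simp; omega)))]
      · simp
    · rw [if_neg hm1]
      exact Finset.sum_eq_zero fun j _ => if_neg (by omega)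
  rw [hsum3, sum_ind n (m:ℕ), sum_ind n ((m:ℕ)+1), if_pos m.isLt]
  have hm : (m:ℕ) < n := m.isLt
  by_cases h0 : (m:ℕ) = 0 ∨ (m:ℕ) = n - 1
  · rw [if_pos h0]
    rcases h0 with h0 | h0
    · rw [if_pos (by omega), if_neg (by omega)]
      nlinarith
    · by_cases hz : (m:ℕ) = 0
      · rw [if_pos (by omega), if_neg (by omega)]
        nlinarith
      · rw [if_neg (by omega), if_pos (by omega)]
        nlinarith
  · rw [if_neg h0]
    push_neg at h0
    rw [if_pos (by omega), if_pos (by omega)]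
    nlinarith

lemma ar1_offdiag {n : ℕ} {φ : ℝ} (hφ0 : 0 ≤ φ) {i j : Fin n} (h : i ≠ j) :
    ar1Lambda n φ i j ≤ 0 := by
  show (if i = j then _ else _) ≤ (0:ℝ)
  rw [if_neg h]
  split_ifs <;> linarith

lemma ar1_min_bound {n : ℕ} (hn : 2 ≤ n) {φ : ℝ} (hφ0 : 0 < φ) (hφ1 : φ < 1)
    (γ : ℝ) (x : Fin n → ℝ) {m : Fin n} (hm : ∀ j, x m ≤ x j) :
    ((γ • (1 : Matrix (Fin n) (Fin n) ℝ) + ar1Lambda n φ) *ᵥ x) m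
      ≤ (γ + ∑ j, ar1Lambda n φ m j) * x m := by
  have h1 : ((γ • (1 : Matrix (Fin n) (Fin n) ℝ) + ar1Lambda n φ) *ᵥ x) m
      = γ * x m + ∑ j, ar1Lambda n φ m j * x j := by
    simp only [Matrix.mulVec, dotProduct, Matrix.add_apply, Matrix.smul_apply,
      Matrix.one_apply, smul_eq_mul, add_mul, Finset.sum_add_distrib]
    congr 1
    rw [Finset.sum_eq_single m]
    · simp
    · intro b _ hb
      rw [if_neg (Ne.symm hb)]
      ring
    · simp
  rw [h1]
  have h2 : ∑ j, ar1Lambda n φ m j * x j ≤ ∑ j, ar1Lambda n φ m j * x m := by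
    apply Finset.sum_le_sum
    intro j _
    by_cases hj : m = j
    · subst hj; exact le_rfl
    · exact mul_le_mul_of_nonpos_left (hm j) (ar1_offdiag hφ0.le hj)
  calc γ * x m + ∑ j, ar1Lambda n φ m j * x j
      ≤ γ * x m + ∑ j, ar1Lambda n φ m j * x m := by linarith
    _ = (γ + ∑ j, ar1Lambda n φ m j) * x m := by rw [← Finset.sum_mul]; ring

lemma ar1_pos_of_mulVec_pos {n : ℕ} (hn : 2 ≤ n) {φ : ℝ} (hφ0 : 0 < φ) (hφ1 : φ < 1)
    {γ : ℝ} (hγ : 0 ≤ γ) (x : Fin n → ℝ)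
    (h : ∀ t, 0 < ((γ • (1 : Matrix (Fin n) (Fin n) ℝ) + ar1Lambda n φ) *ᵥ x) t) :
    ∀ t, 0 < x t := by
  haveI : Nonempty (Fin n) := ⟨⟨0, by omega⟩⟩
  obtain ⟨m, -, hm⟩ := Finset.exists_min_image Finset.univ x Finset.univ_nonempty
  have hm' : ∀ j, x m ≤ x j := fun j => hm j (Finset.mem_univ j)
  have hrow := ar1_rowsum hn hφ0 hφ1 m
  have hxm : 0 < x m := by
    by_contra h'
    push_neg at h'
    have := ar1_min_bound hn hφ0 hφ1 γ x hm'
    have h3 : (γ + ∑ j, ar1Lambda n φ m j) * x m ≤ 0 :=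
      mul_nonpos_of_nonneg_of_nonpos (by linarith) h'
    linarith [h m]
  exact fun t => lt_of_lt_of_le hxm (hm' t)

lemma ar1_nonneg_of_mulVec_nonneg {n : ℕ} (hn : 2 ≤ n) {φ : ℝ} (hφ0 : 0 < φ) (hφ1 : φ < 1)
    {γ : ℝ} (hγ : 0 ≤ γ) (x : Fin n → ℝ)
    (h : ∀ t, 0 ≤ ((γ • (1 : Matrix (Fin n) (Fin n) ℝ) + ar1Lambda n φ) *ᵥ x) t) :
    ∀ t, 0 ≤ x t := by
  haveI : Nonempty (Fin n) := ⟨⟨0, by omega⟩⟩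
  obtain ⟨m, -, hm⟩ := Finset.exists_min_image Finset.univ x Finset.univ_nonempty
  have hm' : ∀ j, x m ≤ x j := fun j => hm j (Finset.mem_univ j)
  have hrow := ar1_rowsum hn hφ0 hφ1 m
  have hxm : 0 ≤ x m := by
    by_contra h'
    push_neg at h'
    have := ar1_min_bound hn hφ0 hφ1 γ x hm'
    have h3 : (γ + ∑ j, ar1Lambda n φ m j) * x m < 0 :=
      mul_neg_of_pos_of_neg (by linarith) h'
    linarith [h m]
  exact fun t => le_trans hxm (hm' t)

lemma ar1_A_isUnit {n : ℕ} (hn : 2 ≤ n) {φ : ℝ} (hφ0 : 0 < φ) (hφ1 : φ < 1)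
    {γ : ℝ} (hγ : 0 ≤ γ) :
    IsUnit (γ • (1 : Matrix (Fin n) (Fin n) ℝ) + ar1Lambda n φ) := by
  rw [← Matrix.mulVec_injective_iff_isUnit]
  set A := γ • (1 : Matrix (Fin n) (Fin n) ℝ) + ar1Lambda n φ with hA
  intro x y hxy
  have hz : A *ᵥ (x - y) = 0 := by
    rw [Matrix.mulVec_sub, hxy, sub_self]
  have h1 : ∀ t, 0 ≤ (x - y) t := by
    apply ar1_nonneg_of_mulVec_nonneg hn hφ0 hφ1 hγ
    intro t; rw [hz]; exact le_rfl
  have h2 : ∀ t, 0 ≤ (y - x) t := by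
    apply ar1_nonneg_of_mulVec_nonneg hn hφ0 hφ1 hγ
    intro t
    have : A *ᵥ (y - x) = 0 := by rw [Matrix.mulVec_sub, hxy, sub_self]
    rw [this]; exact le_rfl
  funext t
  have := h1 t
  have := h2 t
  simp only [Pi.sub_apply] at *
  linarith

/-- writing `w^opt(γ) = (γΛ⁻¹ + I)⁻¹ 1` for fixed `0 < φ < 1`,
each entry of `w^opt` is strictly decreasing in `γ > 0`; indeed the derivative
`∂w^opt/∂γ = -(γΛ⁻¹+I)⁻¹ Λ⁻¹ (γΛ⁻¹+I)⁻¹ 1` has all entries strictly negative. -/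
theorem stmt_13 (n : ℕ) (hn : 2 ≤ n) (φ : ℝ) (hφ0 : 0 < φ) (hφ1 : φ < 1)
    (Λ : Matrix (Fin n) (Fin n) ℝ) (hΛ : Λ = ar1Lambda n φ)
    (w : ℝ → Fin n → ℝ)
    (hw : ∀ γ : ℝ, w γ = (γ • Λ⁻¹ + 1)⁻¹ *ᵥ (1 : Fin n → ℝ)) :
    (∀ t : Fin n, ∀ γ₁ γ₂ : ℝ, 0 < γ₁ → γ₁ < γ₂ → w γ₂ t < w γ₁ t) ∧
    (∀ γ : ℝ, 0 < γ → ∀ t : Fin n,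
      HasDerivAt (fun s => w s t)
        ((-((γ • Λ⁻¹ + 1)⁻¹ * Λ⁻¹ * (γ • Λ⁻¹ + 1)⁻¹) *ᵥ (1 : Fin n → ℝ)) t) γ ∧
      (-((γ • Λ⁻¹ + 1)⁻¹ * Λ⁻¹ * (γ • Λ⁻¹ + 1)⁻¹) *ᵥ (1 : Fin n → ℝ)) t < 0) := by
  have hΛunit : IsUnit Λ := by
    have := ar1_A_isUnit (γ := 0) hn hφ0 hφ1 le_rfl
    simpa [← hΛ] using this
  have hΛdet : IsUnit Λ.det := (Matrix.isUnit_iff_isUnit_det _).mp hΛunit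
  have hAunit : ∀ s : ℝ, 0 ≤ s → IsUnit (s • (1 : Matrix (Fin n) (Fin n) ℝ) + Λ) := by
    intro s hs
    have := ar1_A_isUnit (γ := s) hn hφ0 hφ1 hs
    rwa [← hΛ] at this
  have hAdet : ∀ s : ℝ, 0 ≤ s → IsUnit (s • (1 : Matrix (Fin n) (Fin n) ℝ) + Λ).det :=
    fun s hs => (Matrix.isUnit_iff_isUnit_det _).mp (hAunit s hs)
  have hX : ∀ s : ℝ, s • Λ⁻¹ + 1 = Λ⁻¹ * (s • (1 : Matrix (Fin n) (Fin n) ℝ) + Λ) := by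
    intro s
    rw [Matrix.mul_add, Matrix.mul_smul, Matrix.mul_one, Matrix.nonsing_inv_mul _ hΛdet]
  have hXinv : ∀ s : ℝ, 0 ≤ s →
      (s • Λ⁻¹ + 1)⁻¹ = (s • (1 : Matrix (Fin n) (Fin n) ℝ) + Λ)⁻¹ * Λ := by
    intro s hs
    rw [hX, Matrix.mul_inv_rev, Matrix.nonsing_inv_nonsing_inv _ hΛdet]
  set v : Fin n → ℝ := Λ *ᵥ (1 : Fin n → ℝ) with hv
  have hvpos : ∀ t, 0 < v t := by
    intro t
    have h1 : v t = ∑ j, ar1Lambda n φ t j := by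
      simp [hv, Matrix.mulVec, dotProduct, hΛ]
    rw [h1]; exact ar1_rowsum hn hφ0 hφ1 t
  have hwA : ∀ s : ℝ, 0 ≤ s →
      w s = (s • (1 : Matrix (Fin n) (Fin n) ℝ) + Λ)⁻¹ *ᵥ v := by
    intro s hs
    rw [hw, hXinv s hs, ← Matrix.mulVec_mulVec]
  have hAw : ∀ s : ℝ, 0 ≤ s →
      (s • (1 : Matrix (Fin n) (Fin n) ℝ) + Λ) *ᵥ w s = v := by
    intro s hs
    rw [hwA s hs, Matrix.mulVec_mulVec, Matrix.mul_nonsing_inv _ (hAdet s hs),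
      Matrix.one_mulVec]
  -- positivity of entries of w
  have hwpos : ∀ s : ℝ, 0 ≤ s → ∀ t, 0 < w s t := by
    intro s hs t
    refine ar1_pos_of_mulVec_pos hn hφ0 hφ1 hs (w s) (fun u => ?_) t
    rw [← hΛ, hAw s hs]
    exact hvpos u
  -- positivity of entries of A(s)⁻¹ *ᵥ y for positive y
  have hinvpos : ∀ s : ℝ, 0 ≤ s → ∀ y : Fin n → ℝ, (∀ u, 0 < y u) →
      ∀ t, 0 < ((s • (1 : Matrix (Fin n) (Fin n) ℝ) + Λ)⁻¹ *ᵥ y) t := by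
    intro s hs y hy t
    refine ar1_pos_of_mulVec_pos hn hφ0 hφ1 hs _ (fun u => ?_) t
    rw [← hΛ, Matrix.mulVec_mulVec, Matrix.mul_nonsing_inv _ (hAdet s hs),
      Matrix.one_mulVec]
    exact hy u
  constructor
  · -- monotonicity
    intro t γ₁ γ₂ hγ₁ hlt
    have h1 : (0:ℝ) ≤ γ₁ := hγ₁.le
    have h2 : (0:ℝ) ≤ γ₂ := by linarith
    have hA12 : γ₁ • (1 : Matrix (Fin n) (Fin n) ℝ) + Λ
        = (γ₂ • (1 : Matrix (Fin n) (Fin n) ℝ) + Λ) - (γ₂ - γ₁) • 1 := by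
      rw [sub_smul]; abel
    have key : (γ₁ • (1 : Matrix (Fin n) (Fin n) ℝ) + Λ) *ᵥ (w γ₁ - w γ₂)
        = (γ₂ - γ₁) • w γ₂ := by
      rw [Matrix.mulVec_sub, hAw γ₁ h1]
      nth_rewrite 1 [hA12]
      rw [Matrix.sub_mulVec, hAw γ₂ h2, Matrix.smul_mulVec, Matrix.one_mulVec]
      abel
    have hpos : ∀ u, 0 < (w γ₁ - w γ₂) u := by
      refine ar1_pos_of_mulVec_pos hn hφ0 hφ1 h1 _ (fun u => ?_)
      rw [← hΛ, key]
      have := hwpos γ₂ h2 u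
      simp only [Pi.smul_apply, smul_eq_mul]
      nlinarith
    have := hpos t
    simp only [Pi.sub_apply] at this
    linarith
  · -- derivative
    intro γ hγ t
    have hγ' : (0:ℝ) ≤ γ := hγ.le
    letI : NormedRing (Matrix (Fin n) (Fin n) ℝ) := Matrix.linftyOpNormedRing
    letI : NormedAlgebra ℝ (Matrix (Fin n) (Fin n) ℝ) := Matrix.linftyOpNormedAlgebra
    letI : CompleteSpace (Matrix (Fin n) (Fin n) ℝ) := FiniteDimensional.complete ℝ _
    set X : Matrix (Fin n) (Fin n) ℝ := γ • Λ⁻¹ + 1 with hXdef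
    have hXunit : IsUnit X := by
      rw [hXdef, hX γ]
      exact (Matrix.isUnit_nonsing_inv_iff.mpr hΛunit).mul (hAunit γ hγ')
    -- derivative of s ↦ s • Λ⁻¹ + 1
    have hg : HasDerivAt (fun s : ℝ => s • Λ⁻¹ + (1 : Matrix (Fin n) (Fin n) ℝ)) Λ⁻¹ γ := by
      have := ((hasDerivAt_id γ).smul_const Λ⁻¹).add_const (1 : Matrix (Fin n) (Fin n) ℝ)
      rwa [one_smul] at this
    have hUinv : (↑hXunit.unit⁻¹ : Matrix (Fin n) (Fin n) ℝ) = X⁻¹ := by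
      rw [Matrix.coe_units_inv, hXunit.unit_spec]
    have hfd : HasFDerivAt (Ring.inverse : Matrix (Fin n) (Fin n) ℝ → _)
        (-(ContinuousLinearMap.mulLeftRight ℝ _ X⁻¹ X⁻¹)) X := by
      have := hasFDerivAt_ringInverse (𝕜 := ℝ) hXunit.unit
      rwa [hXunit.unit_spec, hUinv] at this
    have h2 : HasDerivAt (fun s : ℝ => Ring.inverse (s • Λ⁻¹ + (1 : Matrix (Fin n) (Fin n) ℝ)))
        (-(X⁻¹ * Λ⁻¹ * X⁻¹)) γ := by
      have := hfd.comp_hasDerivAt γ hg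
      exact this
    -- entry-extraction linear map
    let ℓ : Matrix (Fin n) (Fin n) ℝ →ₗ[ℝ] ℝ :=
      { toFun := fun M => (M *ᵥ (1 : Fin n → ℝ)) t
        map_add' := by intro M N; simp [Matrix.add_mulVec]
        map_smul' := by intro c M; simp [Matrix.smul_mulVec] }
    let ℓ' : Matrix (Fin n) (Fin n) ℝ →L[ℝ] ℝ := LinearMap.toContinuousLinearMap ℓ
    have h3 : HasDerivAt (fun s : ℝ => ℓ' (Ring.inverse (s • Λ⁻¹ + (1 : Matrix (Fin n) (Fin n) ℝ))))
        (ℓ' (-(X⁻¹ * Λ⁻¹ * X⁻¹))) γ := ℓ'.hasFDerivAt.comp_hasDerivAt γ h2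
    have hfun : (fun s : ℝ => w s t)
        = fun s : ℝ => ℓ' (Ring.inverse (s • Λ⁻¹ + (1 : Matrix (Fin n) (Fin n) ℝ))) := by
      funext s
      rw [hw s, ← Matrix.nonsing_inv_eq_ringInverse]
      rfl
    have hval : ℓ' (-(X⁻¹ * Λ⁻¹ * X⁻¹))
        = ((-((γ • Λ⁻¹ + 1)⁻¹ * Λ⁻¹ * (γ • Λ⁻¹ + 1)⁻¹)) *ᵥ (1 : Fin n → ℝ)) t := rfl
    constructor
    · rw [hfun, ← hval]
      exact h3
    · -- negativity
      have hXi : X⁻¹ = (γ • (1 : Matrix (Fin n) (Fin n) ℝ) + Λ)⁻¹ * Λ := hXinv γ hγ'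
      have hprod : (-((γ • Λ⁻¹ + 1)⁻¹ * Λ⁻¹ * (γ • Λ⁻¹ + 1)⁻¹)) *ᵥ (1 : Fin n → ℝ)
          = -((γ • (1 : Matrix (Fin n) (Fin n) ℝ) + Λ)⁻¹ *ᵥ w γ) := by
      -- X⁻¹ * Λ⁻¹ * X⁻¹ = A⁻¹ * (A⁻¹ * Λ)
        have e1 : (γ • Λ⁻¹ + 1)⁻¹ * Λ⁻¹ * (γ • Λ⁻¹ + 1)⁻¹
            = (γ • (1 : Matrix (Fin n) (Fin n) ℝ) + Λ)⁻¹
              * ((γ • (1 : Matrix (Fin n) (Fin n) ℝ) + Λ)⁻¹ * Λ) := by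
          rw [show (γ • Λ⁻¹ + 1)⁻¹ = X⁻¹ from rfl, hXi]
          rw [Matrix.mul_assoc, Matrix.mul_assoc]
          congr 1
          rw [← Matrix.mul_assoc, Matrix.mul_nonsing_inv _ hΛdet, Matrix.one_mul]
        rw [e1, Matrix.neg_mulVec, ← Matrix.mulVec_mulVec, ← Matrix.mulVec_mulVec,
          ← hv, ← hwA γ hγ']
      rw [hprod]
      have := hinvpos γ hγ' (w γ) (hwpos γ hγ') t
      simp only [Pi.neg_apply]
      linarith
end
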